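/- Let σ, τ be permutations with τ decomposable, and let τ = τ₁ ⊕ ⋯ ⊕ τ_t be the finest decomposition of τ into indecomposable components. Then μ(σ,τ) = Σ ∏_{m=1}^{t} f(m), where the sum is over all decompositions σ = σ̃₁ ⊕ ⋯ ⊕ σ̃_t (components allowed to be empty) with σ̃_m ≤ τ_m for all m, and f(m) = μ(σ̃_m, τ_m) + 1 if σ̃_m = ∅ and τ_{m−1} = τ_m, and f(m) = μ(σ̃_m, τ_m) otherwise (the condition τ_{m−1} = τ_m is false when m = 1). -/

import Mathlib

open scoped Classical

/-- The set of all (finite) permutations, as patterns: a permutation of length `n`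
together with its length. -/
abbrev PermPt := Σ n : ℕ, Equiv.Perm (Fin n)

/-- Pattern containment order: `σ` occurs in `τ` if there is a strictly monotone
choice of positions on which `τ` is order-isomorphic to `σ`. -/
def ple (σ τ : PermPt) : Prop :=
  ∃ f : Fin σ.1 → Fin τ.1, StrictMono f ∧
    ∀ a b : Fin σ.1, σ.2 a ≤ σ.2 b ↔ τ.2 (f a) ≤ τ.2 (f b)

/-- Strict pattern containment. -/
def plt (σ τ : PermPt) : Prop := ple σ τ ∧ ¬ ple τ σ

/-- Direct sum of permutations. -/
def pds {m n : ℕ} (α : Equiv.Perm (Fin m)) (β : Equiv.Perm (Fin n)) :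
    Equiv.Perm (Fin (m + n)) :=
  finSumFinEquiv.symm.trans ((Equiv.sumCongr α β).trans finSumFinEquiv)

/-- Skew sum of permutations. -/
def pss {m n : ℕ} (α : Equiv.Perm (Fin m)) (β : Equiv.Perm (Fin n)) :
    Equiv.Perm (Fin (m + n)) :=
  finSumFinEquiv.symm.trans
    (((Equiv.sumCongr α β).trans (Equiv.sumComm (Fin m) (Fin n))).trans
      (finSumFinEquiv.trans (finCongr (Nat.add_comm n m))))

/-- Direct sum, as an operation on `PermPt`. -/
def pdsP (a b : PermPt) : PermPt := ⟨a.1 + b.1, pds a.2 b.2⟩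

/-- Skew sum, as an operation on `PermPt`. -/
def pssP (a b : PermPt) : PermPt := ⟨a.1 + b.1, pss a.2 b.2⟩

/-- The empty permutation. -/
def pempty : PermPt := ⟨0, 1⟩

/-- The permutation `1` of length one. -/
def pone : PermPt := ⟨1, 1⟩

/-- A permutation is decomposable if it is the direct sum of two nonempty
permutations, i.e. some proper nonempty initial segment of positions is mapped
to the corresponding initial segment of values. -/
def Decomp {n : ℕ} (σ : Equiv.Perm (Fin n)) : Prop :=
  ∃ m : ℕ, 0 < m ∧ m < n ∧ ∀ i : Fin n, (i : ℕ) < m → (σ i : ℕ) < m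

/-- Disconnectedness of a set of permutations under pattern containment:
it splits into two nonempty parts with no comparabilities between them. -/
def Disconn (S : Set PermPt) : Prop :=
  ∃ A B : Set PermPt, A ∪ B = S ∧ A.Nonempty ∧ B.Nonempty ∧
    ∀ x ∈ A, ∀ y ∈ B, ¬ ple x y ∧ ¬ ple y x

/-- Direct sum of a list of permutations. -/
def psum (l : List PermPt) : PermPt := l.foldr pdsP pempty

/-- `mu` is the Möbius function of the pattern poset (including the empty
permutation): `mu x x = 1`, `mu x z = 0` when `x ≰ z`, and the values of `mu`
on an interval `[x,z]` with `x < z` sum to zero. -/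
def IsMobius (mu : PermPt → PermPt → ℤ) : Prop :=
  (∀ x : PermPt, mu x x = 1) ∧
  (∀ x z : PermPt, ¬ ple x z → mu x z = 0) ∧
  (∀ x z : PermPt, ple x z → x ≠ z →
    ∑ᶠ y ∈ {y : PermPt | ple x y ∧ ple y z}, mu x y = 0)

/-! ### Basic value API -/

lemma pds_castAdd {m n : ℕ} (α : Equiv.Perm (Fin m)) (β : Equiv.Perm (Fin n)) (x : Fin m) :
    pds α β (Fin.castAdd n x) = Fin.castAdd n (α x) := by
  simp [pds]

lemma pds_natAdd {m n : ℕ} (α : Equiv.Perm (Fin m)) (β : Equiv.Perm (Fin n)) (x : Fin n) :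
    pds α β (Fin.natAdd m x) = Fin.natAdd m (β x) := by
  simp [pds]

/-- Total value function of a `PermPt`. -/
noncomputable def pval (a : PermPt) (i : ℕ) : ℕ :=
  if h : i < a.1 then (a.2 ⟨i, h⟩ : ℕ) else i

lemma pval_lt {a : PermPt} {i : ℕ} (h : i < a.1) : pval a i = (a.2 ⟨i, h⟩ : ℕ) := by
  simp [pval, h]

lemma pval_lt_len {a : PermPt} {i : ℕ} (h : i < a.1) : pval a i < a.1 := by
  rw [pval_lt h]; exact (a.2 ⟨i, h⟩).isLt

lemma permPt_ext {a b : PermPt} (h1 : a.1 = b.1)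
    (h2 : ∀ i : ℕ, i < a.1 → pval a i = pval b i) : a = b := by
  obtain ⟨m, α⟩ := a; obtain ⟨n, β⟩ := b
  dsimp at h1; subst h1
  congr 1
  ext i
  have := h2 i i.isLt
  rw [pval_lt i.isLt, pval_lt i.isLt] at this
  simpa using this

lemma pdsP_fst (a b : PermPt) : (pdsP a b).1 = a.1 + b.1 := rfl

lemma pval_pdsP (a b : PermPt) (i : ℕ) :
    pval (pdsP a b) i =
      if i < a.1 then pval a i else if i < a.1 + b.1 then a.1 + pval b (i - a.1) else i := by
  by_cases hi : i < a.1 + b.1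
  · rw [pval_lt (a := pdsP a b) (i := i) hi]
    by_cases h : i < a.1
    · rw [show ((⟨i, hi⟩ : Fin (pdsP a b).1)) = Fin.castAdd b.1 ⟨i, h⟩ from rfl]
      show ((pds a.2 b.2) (Fin.castAdd b.1 ⟨i, h⟩) : ℕ) = _
      rw [pds_castAdd, if_pos h, pval_lt h]
      rfl
    · have hib : i - a.1 < b.1 := by omega
      rw [show ((⟨i, hi⟩ : Fin (pdsP a b).1)) = Fin.natAdd a.1 ⟨i - a.1, hib⟩ from by
        apply Fin.ext; simp; omega]
      show ((pds a.2 b.2) (Fin.natAdd a.1 ⟨i - a.1, hib⟩) : ℕ) = _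
      rw [pds_natAdd, if_neg h, if_pos hi, pval_lt hib]
      rfl
  · rw [if_neg (by omega), if_neg (by omega)]
    have : ¬ i < (pdsP a b).1 := by rw [pdsP_fst]; omega
    simp [pval, this]

lemma pempty_fst : pempty.1 = 0 := rfl

lemma pdsP_pempty (a : PermPt) : pdsP a pempty = a := by
  apply permPt_ext (by simp [pdsP_fst, pempty_fst])
  intro i hi
  have hi' : i < a.1 := by simpa [pdsP_fst, pempty_fst] using hi
  rw [pval_pdsP, if_pos hi']

lemma pempty_pdsP (a : PermPt) : pdsP pempty a = a := by
  apply permPt_ext (by simp [pdsP_fst, pempty_fst])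
  intro i hi
  have hi' : i < a.1 := by simpa [pdsP_fst, pempty_fst] using hi
  rw [pval_pdsP, if_neg (by simp [pempty_fst]), if_pos (by simp [pempty_fst]; omega)]
  simp [pempty_fst]

lemma pdsP_assoc (a b c : PermPt) : pdsP (pdsP a b) c = pdsP a (pdsP b c) := by
  apply permPt_ext (by simp only [pdsP_fst]; omega)
  intro i hi
  rw [pval_pdsP, pval_pdsP, pval_pdsP, pval_pdsP]
  simp only [pdsP_fst, Nat.sub_sub]
  have h1 := pval_lt_len (a := a) (i := i)
  have h4 : i - a.1 < b.1 → a.1 + pval b (i-a.1) < a.1 + b.1 := fun h => by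
    have := pval_lt_len (a := b) h; omega
  rw [pdsP_fst, pdsP_fst] at hi
  simp only [hi, if_true, show i < a.1 + (b.1 + c.1) by omega]
  split_ifs <;> omega
/-! ### Order basics -/

lemma ple_refl (a : PermPt) : ple a a :=
  ⟨id, strictMono_id, fun _ _ => Iff.rfl⟩

lemma ple_trans {a b c : PermPt} (h1 : ple a b) (h2 : ple b c) : ple a c := by
  obtain ⟨f, hf, hfp⟩ := h1
  obtain ⟨g, hg, hgp⟩ := h2
  exact ⟨g ∘ f, hg.comp hf, fun x y => (hfp x y).trans (hgp (f x) (f y))⟩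

lemma ple_len {a b : PermPt} (h : ple a b) : a.1 ≤ b.1 := by
  obtain ⟨f, hf, -⟩ := h
  simpa using Fintype.card_le_of_injective f hf.injective

lemma strictMono_fin_id {n : ℕ} {f : Fin n → Fin n} (hf : StrictMono f) : f = id := by
  have hbij : Function.Bijective f := Finite.injective_iff_bijective.mp hf.injective
  exact StrictMono.range_inj hf strictMono_id |>.mp
    (by rw [Set.range_eq_univ.mpr hbij.2, Set.range_id])

lemma eq_of_ple_of_len_le {a b : PermPt} (h : ple a b) (hl : b.1 ≤ a.1) : a = b := by
  obtain ⟨n, α⟩ := a; obtain ⟨m, β⟩ := b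
  have hnm : n = m := le_antisymm (ple_len h) hl
  subst hnm
  obtain ⟨f, hf, hp⟩ := h
  dsimp at f hf hp
  rw [strictMono_fin_id hf] at hp
  simp only [id_eq] at hp
  congr 1
  have hg : StrictMono (β ∘ α.symm) := by
    intro x y hxy
    have h1 : α (α.symm x) ≤ α (α.symm y) := by simpa using hxy.le
    have h2 : ¬ α (α.symm y) ≤ α (α.symm x) := by simpa using hxy.not_ge
    have := (hp (α.symm x) (α.symm y)).mp h1
    have h4 := fun hle => h2 ((hp (α.symm y) (α.symm x)).mpr hle)
    exact lt_of_le_not_ge this h4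
  have := strictMono_fin_id hg
  ext i
  have h5 : (β ∘ α.symm) (α i) = α i := by rw [this]; rfl
  have h6 : β i = α i := by simpa using h5
  rw [h6]

lemma ple_antisymm {a b : PermPt} (h1 : ple a b) (h2 : ple b a) : a = b :=
  eq_of_ple_of_len_le h1 (ple_len h2)

lemma ple_pempty (a : PermPt) : ple pempty a :=
  ⟨Fin.elim0, fun i => i.elim0, fun i => i.elim0⟩

lemma pempty_of_len_zero {a : PermPt} (h : a.1 = 0) : a = pempty :=
  permPt_ext (by simp [pempty_fst, h]) (fun i hi => by omega)

lemma ple_of_natEmbed {σ τ : PermPt} (f : ℕ → ℕ)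
    (hb : ∀ i, i < σ.1 → f i < τ.1)
    (hmono : ∀ i j, i < j → j < σ.1 → f i < f j)
    (hpat : ∀ i j, i < σ.1 → j < σ.1 →
      (pval σ i ≤ pval σ j ↔ pval τ (f i) ≤ pval τ (f j))) : ple σ τ := by
  refine ⟨fun i => ⟨f i, hb i i.isLt⟩, ?_, ?_⟩
  · intro i j hij
    exact Fin.mk_lt_mk.mpr (hmono i j (Fin.lt_def.mp hij) j.isLt)
  · intro a b
    have := hpat a b a.isLt b.isLt
    rw [pval_lt a.isLt, pval_lt b.isLt, pval_lt (hb a a.isLt), pval_lt (hb b b.isLt)] at this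
    simp only [Fin.le_def]
    exact this

lemma ple_natEmbed {σ τ : PermPt} (h : ple σ τ) :
    ∃ f : ℕ → ℕ, (∀ i, i < σ.1 → f i < τ.1) ∧
      (∀ i j, i < j → j < σ.1 → f i < f j) ∧
      (∀ i j, i < σ.1 → j < σ.1 →
        (pval σ i ≤ pval σ j ↔ pval τ (f i) ≤ pval τ (f j))) := by
  obtain ⟨f, hf, hp⟩ := h
  refine ⟨fun i => if h : i < σ.1 then (f ⟨i, h⟩ : ℕ) else 0, ?_, ?_, ?_⟩
  · intro i hi; simp only [hi, dif_pos]; exact (f ⟨i, hi⟩).isLt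
  · intro i j hij hj
    have hi : i < σ.1 := lt_trans hij hj
    simp only [hi, hj, dif_pos]
    exact hf (show (⟨i, hi⟩ : Fin σ.1) < ⟨j, hj⟩ from Fin.mk_lt_mk.mpr hij)
  · intro i j hi hj
    simp only [hi, hj, dif_pos]
    have := hp ⟨i, hi⟩ ⟨j, hj⟩
    rw [pval_lt hi, pval_lt hj, pval_lt (f ⟨i,hi⟩).isLt, pval_lt (f ⟨j,hj⟩).isLt]
    simp only [Fin.le_def] at this
    exact this
/-! ### Monotonicity of direct sums, psum lemmas -/

lemma pval_pdsP_lo {a b : PermPt} {i : ℕ} (h : i < a.1) :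
    pval (pdsP a b) i = pval a i := by
  rw [pval_pdsP, if_pos h]

lemma pval_pdsP_hi {a b : PermPt} {i : ℕ} (h : a.1 ≤ i) (h2 : i < a.1 + b.1) :
    pval (pdsP a b) i = a.1 + pval b (i - a.1) := by
  rw [pval_pdsP, if_neg (by omega), if_pos h2]

lemma pdsP_mono {a a' b b' : PermPt} (ha : ple a a') (hb : ple b b') :
    ple (pdsP a b) (pdsP a' b') := by
  obtain ⟨f₁, hb₁, hm₁, hp₁⟩ := ple_natEmbed ha
  obtain ⟨f₂, hb₂, hm₂, hp₂⟩ := ple_natEmbed hb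
  apply ple_of_natEmbed (fun i => if i < a.1 then f₁ i else a'.1 + f₂ (i - a.1))
  · intro i hi
    rw [pdsP_fst] at hi ⊢
    by_cases h : i < a.1
    · simp only [h, if_pos]; have := hb₁ i h; omega
    · simp only [h, if_neg, not_false_iff]; have := hb₂ (i - a.1) (by omega); omega
  · intro i j hij hj
    rw [pdsP_fst] at hj
    by_cases h1 : i < a.1
    · by_cases h2 : j < a.1
      · simp only [h1, h2, if_pos]; exact hm₁ i j hij h2
      · simp only [h1, if_pos, h2, if_neg, not_false_iff]
        have := hb₁ i h1; omega
    · have h2 : ¬ j < a.1 := by omega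
      simp only [h1, h2, if_neg, not_false_iff]
      have := hm₂ (i - a.1) (j - a.1) (by omega) (by omega); omega
  · intro i j hi hj
    rw [pdsP_fst] at hi hj
    by_cases h1 : i < a.1 <;> by_cases h2 : j < a.1
    · rw [pval_pdsP_lo h1, pval_pdsP_lo h2, if_pos h1, if_pos h2,
        pval_pdsP_lo (hb₁ i h1), pval_pdsP_lo (hb₁ j h2)]
      exact hp₁ i j h1 h2
    · rw [pval_pdsP_lo h1, pval_pdsP_hi (by omega) hj, if_pos h1, if_neg h2,
        pval_pdsP_lo (hb₁ i h1),
        pval_pdsP_hi (by omega) (by have := hb₂ (j - a.1) (by omega); omega),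
        Nat.add_sub_cancel_left]
      have := pval_lt_len h1
      have := pval_lt_len (hb₁ i h1)
      constructor <;> intro <;> omega
    · rw [pval_pdsP_hi (by omega) hi, pval_pdsP_lo h2, if_neg h1, if_pos h2,
        pval_pdsP_lo (hb₁ j h2),
        pval_pdsP_hi (by omega) (by have := hb₂ (i - a.1) (by omega); omega),
        Nat.add_sub_cancel_left]
      have := pval_lt_len h2
      have := pval_lt_len (hb₁ j h2)
      constructor <;> intro <;> omega
    · rw [pval_pdsP_hi (by omega) hi, pval_pdsP_hi (by omega) hj, if_neg h1, if_neg h2,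
        pval_pdsP_hi (by omega) (by have := hb₂ (i - a.1) (by omega); omega),
        pval_pdsP_hi (by omega) (by have := hb₂ (j - a.1) (by omega); omega),
        Nat.add_sub_cancel_left, Nat.add_sub_cancel_left,
        Nat.add_le_add_iff_left, Nat.add_le_add_iff_left]
      exact hp₂ (i - a.1) (j - a.1) (by omega) (by omega)

lemma ple_pdsP_left (a b : PermPt) : ple a (pdsP a b) := by
  have := pdsP_mono (ple_refl a) (ple_pempty b)
  rwa [pdsP_pempty] at this

lemma ple_pdsP_right (a b : PermPt) : ple b (pdsP a b) := by
  have := pdsP_mono (ple_pempty a) (ple_refl b)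
  rwa [pempty_pdsP] at this

lemma psum_cons (x : PermPt) (l : List PermPt) : psum (x :: l) = pdsP x (psum l) := rfl

lemma foldr_pdsP (l : List PermPt) (x : PermPt) :
    List.foldr pdsP x l = pdsP (psum l) x := by
  induction l with
  | nil => simp [psum, pempty_pdsP]
  | cons h t ih => simp only [List.foldr_cons, ih, psum_cons, pdsP_assoc]

lemma psum_concat (l : List PermPt) (x : PermPt) :
    psum (l ++ [x]) = pdsP (psum l) x := by
  rw [psum, List.foldr_append]
  show List.foldr pdsP (pdsP x pempty) l = _
  rw [pdsP_pempty, foldr_pdsP]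

lemma psum_ofFn_succ {s : ℕ} (g : Fin (s + 1) → PermPt) :
    psum (List.ofFn g) = pdsP (psum (List.ofFn (g ∘ Fin.castSucc))) (g (Fin.last s)) := by
  rw [List.ofFn_succ', List.concat_eq_append, psum_concat]
  rfl

lemma psum_fst (l : List PermPt) : (psum l).1 = (l.map Sigma.fst).sum := by
  induction l with
  | nil => rfl
  | cons h t ih => rw [psum_cons, pdsP_fst, List.map_cons, List.sum_cons, ih]
/-! ### Splitting a permutation at a split point -/

def splitsAt (σ : PermPt) (k : ℕ) : Prop :=
  k ≤ σ.1 ∧ ∀ i, i < k → pval σ i < k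

lemma pval_injOn {σ : PermPt} {x y : ℕ} (hx : x < σ.1) (hy : y < σ.1)
    (h : pval σ x = pval σ y) : x = y := by
  rw [pval_lt hx, pval_lt hy] at h
  have := σ.2.injective (Fin.ext h)
  simpa using congrArg Fin.val this

lemma splitsAt_zero (σ : PermPt) : splitsAt σ 0 := ⟨Nat.zero_le _, by omega⟩

lemma splitsAt_len (σ : PermPt) : splitsAt σ σ.1 :=
  ⟨le_refl _, fun i hi => pval_lt_len hi⟩

lemma pval_ge_of_splitsAt {σ : PermPt} {k : ℕ} (h : splitsAt σ k) :
    ∀ i, k ≤ i → i < σ.1 → k ≤ pval σ i := by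
  intro i hki hi
  by_contra hlt
  push_neg at hlt
  have hk : k ≤ σ.1 := h.1
  set F : Fin k → Fin k := fun j => ⟨pval σ j, h.2 j j.isLt⟩ with hF
  have hinj : Function.Injective F := by
    intro x y hxy
    have := congrArg Fin.val hxy
    simp only [hF] at this
    exact Fin.ext (pval_injOn (by omega) (by omega) this)
  have hsurj := (Finite.injective_iff_surjective.mp hinj)
  obtain ⟨j, hj⟩ := hsurj ⟨pval σ i, hlt⟩
  have : pval σ j = pval σ i := by simpa [hF] using congrArg Fin.val hj
  have := pval_injOn (by omega) hi this
  omega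

/-- The pattern formed by the first `k` positions (defined when `σ` splits at `k`). -/
noncomputable def leftP (σ : PermPt) (k : ℕ) : PermPt :=
  if h : splitsAt σ k then
    ⟨k, Equiv.ofBijective (fun i => (⟨pval σ i, h.2 i i.isLt⟩ : Fin k))
      (Finite.injective_iff_bijective.mp (fun x y hxy => by
        have hk := h.1
        have := congrArg Fin.val hxy
        simp only at this
        exact Fin.ext (pval_injOn (by have := x.isLt; omega) (by have := y.isLt; omega)
          this)))⟩
  else pempty

/-- The pattern formed by the positions after `k` (defined when `σ` splits at `k`). -/
noncomputable def rightP (σ : PermPt) (k : ℕ) : PermPt :=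
  if h : splitsAt σ k then
    ⟨σ.1 - k, Equiv.ofBijective
      (fun i => (⟨pval σ (k + i) - k, by
        have h1 := pval_lt_len (a := σ) (i := k + i) (by have := i.isLt; omega)
        have h2 := pval_ge_of_splitsAt h (k + i) (by omega) (by have := i.isLt; omega)
        omega⟩ : Fin (σ.1 - k)))
      (Finite.injective_iff_bijective.mp (fun x y hxy => by
        have hxl := x.isLt; have hyl := y.isLt
        have h2x := pval_ge_of_splitsAt h (k + x) (by omega) (by omega)
        have h2y := pval_ge_of_splitsAt h (k + y) (by omega) (by omega)
        have := congrArg Fin.val hxy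
        simp only at this
        have : pval σ (k + x) = pval σ (k + y) := by omega
        have := pval_injOn (by omega) (by omega) this
        exact Fin.ext (by omega)))⟩
  else pempty

lemma leftP_fst {σ : PermPt} {k : ℕ} (h : splitsAt σ k) : (leftP σ k).1 = k := by
  simp [leftP, h]

lemma rightP_fst {σ : PermPt} {k : ℕ} (h : splitsAt σ k) : (rightP σ k).1 = σ.1 - k := by
  simp [rightP, h]

lemma pval_leftP {σ : PermPt} {k : ℕ} (h : splitsAt σ k) {i : ℕ} (hi : i < k) :
    pval (leftP σ k) i = pval σ i := by
  simp only [leftP, h, dif_pos]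
  rw [pval_lt (show i < (⟨k, _⟩ : PermPt).1 from hi)]
  simp

lemma pval_rightP {σ : PermPt} {k : ℕ} (h : splitsAt σ k) {i : ℕ} (hi : i < σ.1 - k) :
    pval (rightP σ k) i = pval σ (k + i) - k := by
  simp only [rightP, h, dif_pos]
  rw [pval_lt (show i < (⟨σ.1 - k, _⟩ : PermPt).1 from hi)]
  simp

lemma split_eq {σ : PermPt} {k : ℕ} (h : splitsAt σ k) :
    σ = pdsP (leftP σ k) (rightP σ k) := by
  have hk := h.1
  apply permPt_ext (by rw [pdsP_fst, leftP_fst h, rightP_fst h]; omega)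
  intro i hi
  by_cases h1 : i < k
  · rw [pval_pdsP_lo (by rw [leftP_fst h]; omega), pval_leftP h h1]
  · rw [pval_pdsP_hi (by rw [leftP_fst h]; omega)
      (by rw [leftP_fst h, rightP_fst h]; omega),
      leftP_fst h, pval_rightP h (by omega)]
    have := pval_ge_of_splitsAt h i (by omega) hi
    have h2 : k + (i - k) = i := by omega
    rw [h2]; omega

lemma splitsAt_pdsP (a b : PermPt) : splitsAt (pdsP a b) a.1 := by
  refine ⟨by rw [pdsP_fst]; omega, fun i hi => ?_⟩
  rw [pval_pdsP_lo hi]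
  exact pval_lt_len hi

lemma leftP_pdsP (a b : PermPt) : leftP (pdsP a b) a.1 = a := by
  have h := splitsAt_pdsP a b
  apply permPt_ext (by rw [leftP_fst h])
  intro i hi
  rw [leftP_fst h] at hi
  rw [pval_leftP h hi, pval_pdsP_lo hi]

lemma rightP_pdsP (a b : PermPt) : rightP (pdsP a b) a.1 = b := by
  have h := splitsAt_pdsP a b
  apply permPt_ext (by rw [rightP_fst h, pdsP_fst]; omega)
  intro i hi
  rw [rightP_fst h, pdsP_fst] at hi
  rw [pval_rightP h (by rw [pdsP_fst]; omega),
    pval_pdsP_hi (by omega) (by omega)]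
  simp only [Nat.add_sub_cancel_left]

lemma splitsAt_leftP {σ : PermPt} {k k' : ℕ} (h : splitsAt σ k) (h' : splitsAt σ k')
    (hkk : k ≤ k') : splitsAt (leftP σ k') k ∧ leftP (leftP σ k') k = leftP σ k := by
  have hs : splitsAt (leftP σ k') k := by
    refine ⟨by rw [leftP_fst h']; omega, fun i hi => ?_⟩
    rw [pval_leftP h' (by omega)]
    exact h.2 i hi
  refine ⟨hs, permPt_ext (by rw [leftP_fst hs, leftP_fst h]) ?_⟩
  intro i hi
  rw [leftP_fst hs] at hi
  rw [pval_leftP hs hi, pval_leftP h' (by omega), pval_leftP h hi]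

lemma splitsAt_rightP {σ : PermPt} {k k' : ℕ} (h : splitsAt σ k) (h' : splitsAt σ k')
    (hkk : k ≤ k') :
    splitsAt (rightP σ k) (k' - k) ∧ rightP (rightP σ k) (k' - k) = rightP σ k' := by
  have hk' : k' ≤ σ.1 := h'.1
  have hs : splitsAt (rightP σ k) (k' - k) := by
    refine ⟨by rw [rightP_fst h]; omega, fun i hi => ?_⟩
    rw [pval_rightP h (by omega)]
    have := h'.2 (k + i) (by omega)
    have := pval_ge_of_splitsAt h (k + i) (by omega) (by omega)
    omega
  refine ⟨hs, permPt_ext (by rw [rightP_fst hs, rightP_fst h, rightP_fst h']; omega) ?_⟩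
  intro i hi
  rw [rightP_fst hs, rightP_fst h] at hi
  rw [pval_rightP hs (by rw [rightP_fst h]; omega), pval_rightP h (by omega),
    pval_rightP h' (by omega)]
  have harg : k + (k' - k + i) = k' + i := by omega
  rw [harg]
  have := pval_ge_of_splitsAt h' (k' + i) (by omega) (by omega)
  omega

lemma ple_leftP_self {σ : PermPt} {k : ℕ} (h : splitsAt σ k) : ple (leftP σ k) σ := by
  conv_rhs => rw [split_eq h]
  exact ple_pdsP_left _ _

lemma ple_rightP_self {σ : PermPt} {k : ℕ} (h : splitsAt σ k) : ple (rightP σ k) σ := by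
  conv_rhs => rw [split_eq h]
  exact ple_pdsP_right _ _

lemma ple_rightP_of_le {σ : PermPt} {k k' : ℕ} (h : splitsAt σ k) (h' : splitsAt σ k')
    (hkk : k ≤ k') : ple (rightP σ k') (rightP σ k) := by
  obtain ⟨hs, heq⟩ := splitsAt_rightP h h' hkk
  rw [← heq]
  exact ple_rightP_self hs

lemma ple_leftP_of_le {σ : PermPt} {k k' : ℕ} (h : splitsAt σ k) (h' : splitsAt σ k')
    (hkk : k ≤ k') : ple (leftP σ k) (leftP σ k') := by
  obtain ⟨hs, heq⟩ := splitsAt_leftP h h' hkk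
  rw [← heq]
  exact ple_leftP_self hs
/-! ### Occurrences in a direct sum split -/

lemma ple_pdsP_of_split {σ A B : PermPt} {k : ℕ} (h : splitsAt σ k)
    (h1 : ple (leftP σ k) A) (h2 : ple (rightP σ k) B) : ple σ (pdsP A B) := by
  rw [split_eq h]
  exact pdsP_mono h1 h2

lemma ple_pdsP_elim {σ A B : PermPt} (hple : ple σ (pdsP A B)) :
    ∃ k, splitsAt σ k ∧ ple (leftP σ k) A ∧ ple (rightP σ k) B := by
  obtain ⟨f, hb, hm, hp⟩ := ple_natEmbed hple
  rw [pdsP_fst] at hb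
  set s : Finset ℕ := (Finset.range σ.1).filter (fun i => f i < A.1) with hs
  set k := s.card with hk
  have hmem : ∀ i, i < σ.1 → (i ∈ s ↔ i < k) := by
    intro i hi
    constructor
    · intro his
      have hsub : Finset.range (i + 1) ⊆ s := by
        intro j hj
        rw [Finset.mem_range] at hj
        rcases Nat.lt_or_ge j i with hji | hji
        · refine Finset.mem_filter.mpr ⟨Finset.mem_range.mpr (by omega), ?_⟩
          have hfj : f j < f i := hm j i hji hi
          have : f i < A.1 := (Finset.mem_filter.mp his).2
          omega
        · have : j = i := by omega
          rw [this]; exact his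
      have := Finset.card_le_card hsub
      simp only [Finset.card_range] at this
      omega
    · intro hik
      by_contra hns
      have hsub : s ⊆ Finset.range i := by
        intro j hj
        obtain ⟨hj1, hj2⟩ := Finset.mem_filter.mp hj
        rw [Finset.mem_range] at hj1 ⊢
        rcases Nat.lt_trichotomy j i with h | h | h
        · exact h
        · exact absurd (h ▸ hj) hns
        · exfalso
          have := hm i j h hj1
          exact absurd (Finset.mem_filter.mpr ⟨Finset.mem_range.mpr hi, by omega⟩) hns
      have := Finset.card_le_card hsub
      simp only [Finset.card_range] at this
      omega
  have hkle : k ≤ σ.1 := by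
    have : s ⊆ Finset.range σ.1 := Finset.filter_subset _ _
    have := Finset.card_le_card this
    simpa using this
  -- values on s-positions are below values on complement positions
  have hvlt : ∀ i j, i < σ.1 → j < σ.1 → i < k → ¬ j < k → pval σ i < pval σ j := by
    intro i j hi hj hik hjk
    have his : f i < A.1 := (Finset.mem_filter.mp ((hmem i hi).mpr hik)).2
    have hjs : ¬ f j < A.1 := by
      intro hfj
      exact hjk ((hmem j hj).mp (Finset.mem_filter.mpr ⟨Finset.mem_range.mpr hj, hfj⟩))
    have hτi : pval (pdsP A B) (f i) = pval A (f i) := pval_pdsP_lo his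
    have hτj : pval (pdsP A B) (f j) = A.1 + pval B (f j - A.1) :=
      pval_pdsP_hi (by omega) (hb j hj)
    have hAi : pval A (f i) < A.1 := pval_lt_len his
    have hle : pval σ i ≤ pval σ j := by
      rw [hp i j hi hj, hτi, hτj]; omega
    have hne : pval σ i ≠ pval σ j := fun hc => by
      have := pval_injOn hi hj hc; omega
    omega
  have hsplit : splitsAt σ k := by
    refine ⟨hkle, fun i hi => ?_⟩
    by_contra hge
    push_neg at hge
    -- count: positions not in s have values > pval σ i
    set U := (Finset.range σ.1).filter (fun j => ¬ j < k) with hU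
    have hUcard : U.card = σ.1 - k := by
      have : U = Finset.Ico k σ.1 := by
        ext j
        simp only [hU, Finset.mem_filter, Finset.mem_range, Finset.mem_Ico]
        omega
      rw [this, Nat.card_Ico]
    have himg : U.image (fun j => pval σ j) ⊆ Finset.Ico (pval σ i + 1) σ.1 := by
      intro v hv
      obtain ⟨j, hj, hjv⟩ := Finset.mem_image.mp hv
      obtain ⟨hj1, hj2⟩ := Finset.mem_filter.mp hj
      rw [Finset.mem_range] at hj1
      have := hvlt i j (by omega) hj1 hi hj2
      rw [Finset.mem_Ico]
      have := pval_lt_len (a := σ) (i := j) hj1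
      omega
    have hinj : (U.image (fun j => pval σ j)).card = U.card := by
      apply Finset.card_image_of_injOn
      intro x hx y hy hxy
      obtain ⟨hx1, -⟩ := Finset.mem_filter.mp hx
      obtain ⟨hy1, -⟩ := Finset.mem_filter.mp hy
      exact pval_injOn (Finset.mem_range.mp hx1) (Finset.mem_range.mp hy1) hxy
    have hcard := Finset.card_le_card himg
    rw [hinj, hUcard, Nat.card_Ico] at hcard
    have := pval_lt_len (a := σ) (i := i) (by omega)
    omega
  refine ⟨k, hsplit, ?_, ?_⟩
  · apply ple_of_natEmbed f
    · intro i hi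
      rw [leftP_fst hsplit] at hi
      exact (Finset.mem_filter.mp ((hmem i (by omega)).mpr hi)).2
    · intro i j hij hj
      rw [leftP_fst hsplit] at hj
      exact hm i j hij (by omega)
    · intro i j hi hj
      rw [leftP_fst hsplit] at hi hj
      have hfi : f i < A.1 := (Finset.mem_filter.mp ((hmem i (by omega)).mpr hi)).2
      have hfj : f j < A.1 := (Finset.mem_filter.mp ((hmem j (by omega)).mpr hj)).2
      rw [pval_leftP hsplit hi, pval_leftP hsplit hj]
      have := hp i j (by omega) (by omega)
      rw [pval_pdsP_lo hfi, pval_pdsP_lo hfj] at this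
      exact this
  · apply ple_of_natEmbed (fun j => f (k + j) - A.1)
    · intro i hi
      rw [rightP_fst hsplit] at hi
      have h1 : ¬ f (k + i) < A.1 := by
        intro hc
        have : k + i ∈ s := Finset.mem_filter.mpr ⟨Finset.mem_range.mpr (by omega), hc⟩
        have := (hmem (k + i) (by omega)).mp this
        omega
      have := hb (k + i) (by omega)
      omega
    · intro i j hij hj
      rw [rightP_fst hsplit] at hj
      have h1 : ¬ f (k + i) < A.1 := by
        intro hc
        have : k + i ∈ s := Finset.mem_filter.mpr ⟨Finset.mem_range.mpr (by omega), hc⟩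
        have := (hmem (k + i) (by omega)).mp this
        omega
      have := hm (k + i) (k + j) (by omega) (by omega)
      omega
    · intro i j hi hj
      rw [rightP_fst hsplit] at hi hj
      have hnoti : ¬ f (k + i) < A.1 := by
        intro hc
        have : k + i ∈ s := Finset.mem_filter.mpr ⟨Finset.mem_range.mpr (by omega), hc⟩
        have := (hmem (k + i) (by omega)).mp this
        omega
      have hnotj : ¬ f (k + j) < A.1 := by
        intro hc
        have : k + j ∈ s := Finset.mem_filter.mpr ⟨Finset.mem_range.mpr (by omega), hc⟩
        have := (hmem (k + j) (by omega)).mp this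
        omega
      rw [pval_rightP hsplit hi, pval_rightP hsplit hj]
      have hgi := pval_ge_of_splitsAt hsplit (k + i) (by omega) (by omega)
      have hgj := pval_ge_of_splitsAt hsplit (k + j) (by omega) (by omega)
      have hpp := hp (k + i) (k + j) (by omega) (by omega)
      rw [pval_pdsP_hi (by omega) (hb (k + i) (by omega)),
        pval_pdsP_hi (by omega) (hb (k + j) (by omega))] at hpp
      constructor
      · intro hle
        have : pval σ (k + i) ≤ pval σ (k + j) := by omega
        have := hpp.mp this
        omega
      · intro hle
        have : A.1 + pval B (f (k + i) - A.1) ≤ A.1 + pval B (f (k + j) - A.1) := by omega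
        have := hpp.mpr this
        omega
/-! ### Finiteness and the two Möbius recursions -/

lemma finite_len_le (N : ℕ) : {y : PermPt | y.1 ≤ N}.Finite := by
  have : {y : PermPt | y.1 ≤ N} ⊆
      Set.range (fun p : (Σ n : Fin (N + 1), Equiv.Perm (Fin n)) => (⟨p.1, p.2⟩ : PermPt)) := by
    intro y hy
    simp only [Set.mem_setOf_eq] at hy
    exact ⟨⟨⟨y.1, by omega⟩, y.2⟩, rfl⟩
  exact Set.Finite.subset (Set.finite_range _) this

lemma finite_ple (z : PermPt) : {y : PermPt | ple y z}.Finite :=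
  (finite_len_le z.1).subset (fun y hy => ple_len hy)

lemma finite_interval (x z : PermPt) : {y : PermPt | ple x y ∧ ple y z}.Finite :=
  (finite_ple z).subset (fun _ hy => hy.2)

noncomputable def IccF (x z : PermPt) : Finset PermPt := (finite_interval x z).toFinset

lemma mem_IccF {x z y : PermPt} : y ∈ IccF x z ↔ ple x y ∧ ple y z := by
  simp [IccF, Set.Finite.mem_toFinset]

lemma IccF_self (z : PermPt) : IccF z z = {z} := by
  ext y
  simp only [mem_IccF, Finset.mem_singleton]
  exact ⟨fun h => (ple_antisymm h.2 h.1), fun h => by subst h; exact ⟨ple_refl y, ple_refl y⟩⟩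

lemma IccF_empty {x z : PermPt} (h : ¬ ple x z) : IccF x z = ∅ := by
  ext y
  simp only [mem_IccF, Finset.notMem_empty, iff_false]
  exact fun hy => h (ple_trans hy.1 hy.2)

section Mob
variable {mu : PermPt → PermPt → ℤ} (hmu : IsMobius mu)

lemma mu_sum_right (hmu : IsMobius mu) {x z : PermPt} (hxz : ple x z) :
    ∑ y ∈ IccF x z, mu x y = if x = z then 1 else 0 := by
  by_cases h : x = z
  · subst h
    rw [IccF_self, Finset.sum_singleton, hmu.1, if_pos rfl]
  · rw [if_neg h]
    have := hmu.2.2 x z hxz h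
    rw [show {y : PermPt | ple x y ∧ ple y z} = ↑(IccF x z) from
      ((finite_interval x z).coe_toFinset).symm] at this
    rwa [finsum_mem_coe_finset] at this

lemma mu_sum_left_aux (hmu : IsMobius mu) :
    ∀ d : ℕ, ∀ x z : PermPt, ple x z → z.1 - x.1 ≤ d →
      ∑ y ∈ IccF x z, mu y z = if x = z then 1 else 0 := by
  intro d
  induction d with
  | zero =>
    intro x z hxz hd
    have : x = z := eq_of_ple_of_len_le hxz (by omega)
    subst this
    rw [IccF_self, Finset.sum_singleton, hmu.1, if_pos rfl]
  | succ d ih =>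
    intro x z hxz hd
    by_cases hxez : x = z
    · subst hxez
      rw [IccF_self, Finset.sum_singleton, hmu.1, if_pos rfl]
    · rw [if_neg hxez]
      have hxmem : x ∈ IccF x z := mem_IccF.mpr ⟨ple_refl x, hxz⟩
      have hzmem : z ∈ IccF x z := mem_IccF.mpr ⟨hxz, ple_refl z⟩
      have key : ∑ w ∈ IccF x z, (∑ y ∈ IccF x w, mu x y) * mu w z = mu x z := by
        have : ∀ w ∈ IccF x z, (∑ y ∈ IccF x w, mu x y) * mu w z
            = (if x = w then 1 else 0) * mu w z := by
          intro w hw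
          rw [mu_sum_right hmu (mem_IccF.mp hw).1]
        rw [Finset.sum_congr rfl this]
        have e : ∀ w ∈ IccF x z, (if x = w then (1:ℤ) else 0) * mu w z
            = if x = w then mu w z else 0 := by
          intro w _
          by_cases h : x = w <;> simp [h]
        rw [Finset.sum_congr rfl e, Finset.sum_ite_eq _ x (fun w => mu w z)]
        simp [hxmem]
      have swap : ∑ w ∈ IccF x z, (∑ y ∈ IccF x w, mu x y) * mu w z
          = ∑ y ∈ IccF x z, mu x y * (∑ w ∈ IccF y z, mu w z) := by
        have e1 : ∀ w ∈ IccF x z, (∑ y ∈ IccF x w, mu x y) * mu w z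
            = ∑ y ∈ IccF x w, mu x y * mu w z := fun w _ => Finset.sum_mul _ _ _
        rw [Finset.sum_congr rfl e1]
        rw [Finset.sum_comm' (s' := fun y => IccF y z) (t' := IccF x z)
          (by
            intro w y
            simp only [mem_IccF]
            constructor
            · rintro ⟨⟨h1, h2⟩, h3, h4⟩
              exact ⟨⟨h4, h2⟩, h3, ple_trans h4 h2⟩
            · rintro ⟨⟨h1, h2⟩, h3, h4⟩
              exact ⟨⟨ple_trans h3 h1, h2⟩, h3, h1⟩)]
        apply Finset.sum_congr rfl
        intro y _
        rw [Finset.mul_sum]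
      have inner : ∀ y ∈ IccF x z, y ≠ x →
          (∑ w ∈ IccF y z, mu w z) = if y = z then 1 else 0 := by
        intro y hy hyx
        obtain ⟨h1, h2⟩ := mem_IccF.mp hy
        have hlen : x.1 < y.1 := by
          rcases Nat.lt_or_ge x.1 y.1 with h | h
          · exact h
          · exact absurd (eq_of_ple_of_len_le h1 h).symm hyx
        exact ih y z h2 (by have := ple_len h2; omega)
      rw [swap] at key
      rw [← Finset.add_sum_erase _ _ hxmem] at key
      have e2 : ∑ y ∈ (IccF x z).erase x, mu x y * (∑ w ∈ IccF y z, mu w z)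
          = ∑ y ∈ (IccF x z).erase x, mu x y * (if y = z then 1 else 0) := by
        apply Finset.sum_congr rfl
        intro y hy
        rw [inner y (Finset.mem_of_mem_erase hy) (Finset.ne_of_mem_erase hy)]
      rw [e2] at key
      have e3 : ∑ y ∈ (IccF x z).erase x, mu x y * (if y = z then 1 else 0)
          = mu x z := by
        have : ∀ y ∈ (IccF x z).erase x,
            mu x y * (if y = z then 1 else 0) = if y = z then mu x y else 0 := by
          intro y _
          by_cases h : y = z <;> simp [h]
        rw [Finset.sum_congr rfl this, Finset.sum_ite_eq' _ z (fun y => mu x y)]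
        rw [if_pos (Finset.mem_erase.mpr ⟨fun hc => hxez hc.symm, hzmem⟩)]
      rw [e3, hmu.1, one_mul] at key
      omega
end Mob
/-! ### Minimal split point machinery -/

lemma decomp_of_splitsAt {τ : PermPt} {k : ℕ} (h : splitsAt τ k) (h1 : 0 < k)
    (h2 : k < τ.1) : Decomp τ.2 := by
  refine ⟨k, h1, h2, fun i hi => ?_⟩
  have := h.2 i hi
  rwa [pval_lt i.isLt] at this

lemma decomp_pdsP {a b : PermPt} (ha : 0 < a.1) (hb : 0 < b.1) : Decomp (pdsP a b).2 :=
  decomp_of_splitsAt (splitsAt_pdsP a b) ha (by rw [pdsP_fst]; omega)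

lemma pdsP_right_cancel {a b c : PermPt} (h : pdsP a b = pdsP a c) : b = c := by
  have h1 := rightP_pdsP a b
  have h2 := rightP_pdsP a c
  rw [← h1, ← h2, h]

lemma rightP_len_self {σ : PermPt} : rightP σ σ.1 = pempty :=
  pempty_of_len_zero (by rw [rightP_fst (splitsAt_len σ)]; omega)

lemma ple_pempty_iff {a : PermPt} : ple a pempty ↔ a = pempty := by
  constructor
  · intro h
    exact pempty_of_len_zero (by have := ple_len h; simpa [pempty_fst] using this)
  · rintro rfl; exact ple_refl _

noncomputable def kminSet (σ h : PermPt) : Finset ℕ :=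
  (Finset.range (σ.1 + 1)).filter (fun k => splitsAt σ k ∧ ple (rightP σ k) h)

lemma mem_kminSet {σ h : PermPt} {k : ℕ} :
    k ∈ kminSet σ h ↔ splitsAt σ k ∧ ple (rightP σ k) h := by
  simp only [kminSet, Finset.mem_filter, Finset.mem_range]
  constructor
  · rintro ⟨-, h2⟩; exact h2
  · intro h2; exact ⟨by have := h2.1.1; omega, h2⟩

lemma kminSet_nonempty (σ h : PermPt) : (kminSet σ h).Nonempty := by
  refine ⟨σ.1, mem_kminSet.mpr ⟨splitsAt_len σ, ?_⟩⟩
  rw [rightP_len_self]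
  exact ple_pempty h

noncomputable def kmin (σ h : PermPt) : ℕ := (kminSet σ h).min' (kminSet_nonempty σ h)

lemma kmin_mem (σ h : PermPt) : splitsAt σ (kmin σ h) ∧ ple (rightP σ (kmin σ h)) h :=
  mem_kminSet.mp ((kminSet σ h).min'_mem (kminSet_nonempty σ h))

lemma kmin_min {σ h : PermPt} {k : ℕ} (hk : splitsAt σ k) (hple : ple (rightP σ k) h) :
    kmin σ h ≤ k :=
  Finset.min'_le _ _ (mem_kminSet.mpr ⟨hk, hple⟩)

lemma ple_pdsP_iff_left {σ A h : PermPt} :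
    ple σ (pdsP A h) ↔ ple (leftP σ (kmin σ h)) A := by
  constructor
  · intro hp
    obtain ⟨k, hk, h1, h2⟩ := ple_pdsP_elim hp
    have hle := kmin_min hk h2
    exact ple_trans (ple_leftP_of_le (kmin_mem σ h).1 hk hle) h1
  · intro hp
    exact ple_pdsP_of_split (kmin_mem σ h).1 hp (kmin_mem σ h).2

lemma ple_psum_mono : ∀ {t : ℕ} (g τf : Fin t → PermPt),
    (∀ m, ple (g m) (τf m)) → ple (psum (List.ofFn g)) (psum (List.ofFn τf)) := by
  intro t
  induction t with
  | zero =>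
    intro g τf _
    simp only [List.ofFn_zero]
    exact ple_refl _
  | succ s ih =>
    intro g τf hg
    rw [psum_ofFn_succ, psum_ofFn_succ]
    exact pdsP_mono (ih _ _ (fun m => hg m.castSucc)) (hg (Fin.last s))
/-! ### The weighted sum and its evaluation -/

noncomputable def wgt (mu : PermPt → PermPt → ℤ) {t : ℕ} (τf : Fin t → PermPt)
    (m : Fin t) (h : PermPt) : ℤ :=
  if h = pempty ∧ ∃ _ : 1 ≤ (m : ℕ),
      τf ⟨(m : ℕ) - 1, lt_of_le_of_lt (Nat.sub_le _ _) m.isLt⟩ = τf m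
  then mu h (τf m) + 1 else mu h (τf m)

noncomputable def Gfin {t : ℕ} (τf : Fin t → PermPt) (σ : PermPt) :
    Finset (Fin t → PermPt) :=
  (Fintype.piFinset (fun m => IccF pempty (τf m))).filter
    (fun g => ple σ (psum (List.ofFn g)))

lemma mem_Gfin {t : ℕ} {τf : Fin t → PermPt} {σ : PermPt} {g : Fin t → PermPt} :
    g ∈ Gfin τf σ ↔ (∀ m, ple (g m) (τf m)) ∧ ple σ (psum (List.ofFn g)) := by
  simp [Gfin, Fintype.mem_piFinset, mem_IccF, ple_pempty]

lemma wgt_castSucc (mu : PermPt → PermPt → ℤ) {s : ℕ} (τf : Fin (s + 1) → PermPt)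
    (m : Fin s) (h : PermPt) :
    wgt mu (fun j => τf j.castSucc) m h = wgt mu τf m.castSucc h := rfl

lemma psum_ofFn_succ' {s : ℕ} (g : Fin (s + 1) → PermPt) :
    psum (List.ofFn g) = pdsP (psum (List.ofFn (fun i => g i.castSucc))) (g (Fin.last s)) :=
  psum_ofFn_succ g

lemma psum_ofFn_one (g : Fin 1 → PermPt) : psum (List.ofFn g) = g 0 := by
  rw [psum_ofFn_succ']
  have : (List.ofFn (fun i : Fin 0 => g i.castSucc)) = [] := List.ofFn_zero
  rw [this]
  show pdsP pempty _ = _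
  rw [pempty_pdsP]
  rfl

lemma mu_sum_left_total {mu : PermPt → PermPt → ℤ} (hmu : IsMobius mu) (x z : PermPt) :
    ∑ y ∈ IccF x z, mu y z = if x = z then 1 else 0 := by
  by_cases h : ple x z
  · exact mu_sum_left_aux hmu (z.1 - x.1) x z h (le_refl _)
  · rw [IccF_empty h, Finset.sum_empty, if_neg (by intro hc; subst hc; exact h (ple_refl x))]
lemma key_base {mu : PermPt → PermPt → ℤ} (hmu : IsMobius mu)
    (τf : Fin 1 → PermPt) (σ : PermPt) :
    ∑ g ∈ Gfin τf σ, ∏ m, wgt mu τf m (g m)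
      = if σ = psum (List.ofFn τf) then 1 else 0 := by
  have hw : ∀ h : PermPt, wgt mu τf 0 h = mu h (τf 0) := by
    intro h
    rw [wgt, if_neg]
    rintro ⟨-, h1, -⟩
    simp at h1
  have := Finset.sum_bij' (s := Gfin τf σ) (t := IccF σ (τf 0))
    (f := fun g => ∏ m, wgt mu τf m (g m)) (g := fun h => mu h (τf 0))
    (fun g _ => g 0) (fun h _ => fun _ => h)
    (fun g hg => by
      obtain ⟨h1, h2⟩ := mem_Gfin.mp hg
      rw [psum_ofFn_one] at h2
      exact mem_IccF.mpr ⟨h2, h1 0⟩)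
    (fun h hh => by
      obtain ⟨h1, h2⟩ := mem_IccF.mp hh
      refine mem_Gfin.mpr ⟨fun m => ?_, ?_⟩
      · have : m = 0 := Subsingleton.elim _ _
        rw [this]; exact h2
      · rw [psum_ofFn_one]; exact h1)
    (fun g hg => by
      funext m
      have : m = 0 := Subsingleton.elim _ _
      rw [this])
    (fun h hh => rfl)
    (fun g hg => by rw [Fin.prod_univ_one, hw])
  rw [this, mu_sum_left_total hmu, psum_ofFn_one]
lemma key_indicator {τppp τpen β σ : PermPt} (hpen : 0 < τpen.1)
    (hpenind : ¬ Decomp τpen.2) (hσ : σ = pdsP (pdsP τppp τpen) β) (h : PermPt) :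
    leftP σ (kmin σ h) = pdsP τppp τpen ↔ (ple β h ∧ ¬ ple (pdsP τpen β) h) := by
  have hsp : splitsAt σ (pdsP τppp τpen).1 := by
    rw [hσ]; exact splitsAt_pdsP _ _
  have hβr : rightP σ (pdsP τppp τpen).1 = β := by
    have := rightP_pdsP (pdsP τppp τpen) β
    rwa [← hσ] at this
  have hlp : leftP σ (pdsP τppp τpen).1 = pdsP τppp τpen := by
    have := leftP_pdsP (pdsP τppp τpen) β
    rwa [← hσ] at this
  have hσ' : σ = pdsP τppp (pdsP τpen β) := by rw [hσ, pdsP_assoc]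
  have hspp : splitsAt σ τppp.1 := by
    rw [hσ']; exact splitsAt_pdsP _ _
  have hrp' : rightP σ τppp.1 = pdsP τpen β := by
    have := rightP_pdsP τppp (pdsP τpen β)
    rwa [← hσ'] at this
  have hKK : (pdsP τppp τpen).1 = τppp.1 + τpen.1 := pdsP_fst _ _
  constructor
  · intro he
    have hkm := kmin_mem σ h
    have hklen : kmin σ h = (pdsP τppp τpen).1 := by
      have h1 := leftP_fst hkm.1
      rw [he] at h1
      omega
    constructor
    · have := hkm.2
      rw [hklen, hβr] at this
      exact this
    · intro hxh
      have : kmin σ h ≤ τppp.1 := kmin_min hspp (by rw [hrp']; exact hxh)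
      omega
  · rintro ⟨hβh, hxh⟩
    have hup : kmin σ h ≤ (pdsP τppp τpen).1 := kmin_min hsp (by rw [hβr]; exact hβh)
    rcases Nat.lt_or_ge (kmin σ h) (pdsP τppp τpen).1 with klt | kge
    · exfalso
      have hkm := kmin_mem σ h
      by_cases hk' : kmin σ h ≤ τppp.1
      · apply hxh
        rw [← hrp']
        exact ple_trans (ple_rightP_of_le hkm.1 hspp hk') hkm.2
      · push_neg at hk'
        obtain ⟨hs2, -⟩ := splitsAt_rightP hspp hkm.1 (by omega)
        rw [hrp'] at hs2
        have hd1 : 0 < kmin σ h - τppp.1 := by omega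
        have hd2 : kmin σ h - τppp.1 < τpen.1 := by omega
        have hsplit : splitsAt τpen (kmin σ h - τppp.1) := by
          refine ⟨by omega, fun i hi => ?_⟩
          have := hs2.2 i hi
          rwa [pval_pdsP_lo (by omega)] at this
        exact hpenind (decomp_of_splitsAt hsplit hd1 hd2)
    · have : kmin σ h = (pdsP τppp τpen).1 := by omega
      rw [this, hlp]

lemma key_sumA {mu : PermPt → PermPt → ℤ} (hmu : IsMobius mu)
    (τpen τl β : PermPt) (w : PermPt → ℤ)
    (hpen : 0 < τpen.1) (hl : 0 < τl.1) (hlind : ¬ Decomp τl.2)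
    (hw : ∀ h, w h = mu h τl + (if h = pempty ∧ τpen = τl then 1 else 0)) :
    ∑ h ∈ IccF pempty τl, (if (ple β h ∧ ¬ ple (pdsP τpen β) h) then 1 else 0) * w h
      = if β = τl then 1 else 0 := by
  have hβx : ple β (pdsP τpen β) := ple_pdsP_right _ _
  have hterm : ∀ h ∈ IccF pempty τl,
      (if (ple β h ∧ ¬ ple (pdsP τpen β) h) then (1:ℤ) else 0) * w h
        = (if ple β h then w h else 0) - (if ple (pdsP τpen β) h then w h else 0) := by
    intro h _
    by_cases hb : ple β h
    · by_cases hx : ple (pdsP τpen β) h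
      · rw [if_neg (by rintro ⟨-, hc⟩; exact hc hx), if_pos hb, if_pos hx]
        ring
      · rw [if_pos ⟨hb, hx⟩, if_pos hb, if_neg hx]
        ring
    · have hx : ¬ ple (pdsP τpen β) h := fun hc => hb (ple_trans hβx hc)
      rw [if_neg (by rintro ⟨hc, -⟩; exact hb hc), if_neg hb, if_neg hx]
      ring
  rw [Finset.sum_congr rfl hterm, Finset.sum_sub_distrib]
  have hfil : ∀ γ : PermPt, ∑ h ∈ IccF pempty τl, (if ple γ h then w h else 0)
      = ∑ h ∈ IccF γ τl, w h := by
    intro γ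
    rw [← Finset.sum_filter]
    apply Finset.sum_congr _ (fun _ _ => rfl)
    ext h
    simp only [Finset.mem_filter, mem_IccF]
    constructor
    · rintro ⟨⟨-, h2⟩, h3⟩; exact ⟨h3, h2⟩
    · rintro ⟨h1, h2⟩; exact ⟨⟨ple_pempty h, h2⟩, h1⟩
  rw [hfil, hfil]
  -- first sum
  have hA1 : ∑ h ∈ IccF β τl, w h
      = (if β = τl then 1 else 0) + (if β = pempty ∧ τpen = τl then 1 else 0) := by
    rw [Finset.sum_congr rfl (fun h _ => hw h), Finset.sum_add_distrib,
      mu_sum_left_total hmu]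
    congr 1
    by_cases hE : τpen = τl
    · have he1 : ∀ h ∈ IccF β τl, (if h = pempty ∧ τpen = τl then (1:ℤ) else 0)
          = if h = pempty then 1 else 0 := by
        intro h _
        by_cases hp : h = pempty <;> simp [hp, hE]
      rw [Finset.sum_congr rfl he1, Finset.sum_ite_eq' (IccF β τl) pempty (fun _ => (1:ℤ))]
      have : pempty ∈ IccF β τl ↔ β = pempty := by
        rw [mem_IccF]
        constructor
        · rintro ⟨h1, -⟩; exact ple_pempty_iff.mp h1
        · rintro rfl; exact ⟨ple_refl _, ple_pempty _⟩
      by_cases hβe : β = pempty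
      · rw [if_pos (this.mpr hβe), if_pos ⟨hβe, hE⟩]
      · rw [if_neg (fun hc => hβe (this.mp hc)), if_neg (by rintro ⟨hc, -⟩; exact hβe hc)]
    · rw [if_neg (by rintro ⟨-, hc⟩; exact hE hc)]
      apply Finset.sum_eq_zero
      intro h _
      rw [if_neg (by rintro ⟨-, hc⟩; exact hE hc)]
  -- second sum
  have hA2 : ∑ h ∈ IccF (pdsP τpen β) τl, w h
      = (if β = pempty ∧ τpen = τl then 1 else 0) := by
    have he2 : ∀ h ∈ IccF (pdsP τpen β) τl, w h = mu h τl := by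
      intro h hh
      rw [hw h, if_neg, add_zero]
      rintro ⟨hc, -⟩
      obtain ⟨h1, -⟩ := mem_IccF.mp hh
      have := ple_len h1
      rw [hc, pempty_fst, pdsP_fst] at this
      omega
    rw [Finset.sum_congr rfl he2, mu_sum_left_total hmu]
    have hiff : pdsP τpen β = τl ↔ (β = pempty ∧ τpen = τl) := by
      constructor
      · intro hxl
        by_cases hβe : β = pempty
        · refine ⟨hβe, ?_⟩
          rw [hβe, pdsP_pempty] at hxl
          exact hxl
        · exfalso
          have hβpos : 0 < β.1 := by
            rcases Nat.eq_zero_or_pos β.1 with h0 | h0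
            · exact absurd (pempty_of_len_zero h0) hβe
            · exact h0
          apply hlind
          rw [← hxl]
          exact decomp_pdsP hpen hβpos
      · rintro ⟨hβe, hpe⟩
        rw [hβe, pdsP_pempty, hpe]
    by_cases hc : pdsP τpen β = τl
    · rw [if_pos hc, if_pos (hiff.mp hc)]
    · rw [if_neg hc, if_neg (fun hd => hc (hiff.mpr hd))]
  rw [hA1, hA2]
  ring
lemma key_step {mu : PermPt → PermPt → ℤ} (hmu : IsMobius mu) {s : ℕ}
    (IH : ∀ (τg : Fin (s + 1) → PermPt),
      (∀ m, 0 < (τg m).1 ∧ ¬ Decomp (τg m).2) → ∀ σ : PermPt,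
      ∑ g ∈ Gfin τg σ, ∏ m, wgt mu τg m (g m)
        = if σ = psum (List.ofFn τg) then 1 else 0)
    (τf : Fin (s + 2) → PermPt)
    (hcomp : ∀ m, 0 < (τf m).1 ∧ ¬ Decomp (τf m).2) (σ : PermPt) :
    ∑ g ∈ Gfin τf σ, ∏ m, wgt mu τf m (g m)
      = if σ = psum (List.ofFn τf) then 1 else 0 := by
  have hcomp' : ∀ m : Fin (s + 1), 0 < ((fun j : Fin (s+1) => τf j.castSucc) m).1 ∧
      ¬ Decomp ((fun j : Fin (s+1) => τf j.castSucc) m).2 := fun m => hcomp m.castSucc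
  -- Step 1 : rewrite the sum as a double sum over the last part and the rest
  have step1 : ∑ g ∈ Gfin τf σ, ∏ m, wgt mu τf m (g m)
      = ∑ h ∈ IccF pempty (τf (Fin.last (s+1))),
          (∑ g' ∈ Gfin (fun j : Fin (s+1) => τf j.castSucc) (leftP σ (kmin σ h)),
            ∏ m : Fin (s+1), wgt mu (fun j : Fin (s+1) => τf j.castSucc) m (g' m))
          * wgt mu τf (Fin.last (s+1)) h := by
    rw [Finset.sum_bij' (s := Gfin τf σ)
      (t := (IccF pempty (τf (Fin.last (s+1)))).sigma
        (fun h => Gfin (fun j : Fin (s+1) => τf j.castSucc) (leftP σ (kmin σ h))))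
      (g := fun p => (∏ m : Fin (s+1),
          wgt mu (fun j : Fin (s+1) => τf j.castSucc) m (p.2 m))
        * wgt mu τf (Fin.last (s+1)) p.1)
      (i := fun g _ => ⟨g (Fin.last (s+1)), fun m => g m.castSucc⟩)
      (j := fun p _ => Fin.snoc p.2 p.1)
      (hi := by
        intro g hg
        obtain ⟨h1, h2⟩ := mem_Gfin.mp hg
        rw [Finset.mem_sigma]
        constructor
        · exact mem_IccF.mpr ⟨ple_pempty _, h1 _⟩
        · refine mem_Gfin.mpr ⟨fun m => h1 m.castSucc, ?_⟩
          rw [psum_ofFn_succ'] at h2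
          exact ple_pdsP_iff_left.mp h2)
      (hj := by
        intro p hp
        rw [Finset.mem_sigma] at hp
        obtain ⟨hp1, hp2⟩ := hp
        obtain ⟨h1, h2⟩ := mem_Gfin.mp hp2
        refine mem_Gfin.mpr ⟨?_, ?_⟩
        · intro m
          induction m using Fin.lastCases with
          | last =>
            rw [Fin.snoc_last]
            exact (mem_IccF.mp hp1).2
          | cast i =>
            rw [Fin.snoc_castSucc]
            exact h1 i
        · rw [psum_ofFn_succ']
          have e1 : (fun i : Fin (s+1) => Fin.snoc (α := fun _ => PermPt) p.2 p.1 i.castSucc) = p.2 := by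
            funext i; rw [Fin.snoc_castSucc]
          have e2 : Fin.snoc (α := fun _ => PermPt) p.2 p.1 (Fin.last (s+1)) = p.1 := Fin.snoc_last _ _
          rw [e1, e2]
          exact ple_pdsP_iff_left.mpr h2)
      (by intro g hg; dsimp only; exact Fin.snoc_init_self g)
      (by
        intro p hp
        obtain ⟨h, g'⟩ := p
        simp [Fin.snoc_last, Fin.snoc_castSucc])
      (by
        intro g hg
        dsimp only
        rw [Fin.prod_univ_castSucc]
        rfl)]
    rw [Finset.sum_sigma]
    apply Finset.sum_congr rfl
    intro h _
    dsimp only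
    rw [Finset.sum_mul]
  rw [step1]
  -- apply IH to the inner sum
  have step2 : ∀ h ∈ IccF pempty (τf (Fin.last (s+1))),
      (∑ g' ∈ Gfin (fun j : Fin (s+1) => τf j.castSucc) (leftP σ (kmin σ h)),
        ∏ m : Fin (s+1), wgt mu (fun j : Fin (s+1) => τf j.castSucc) m (g' m))
        * wgt mu τf (Fin.last (s+1)) h
      = (if leftP σ (kmin σ h) = psum (List.ofFn (fun j : Fin (s+1) => τf j.castSucc))
          then 1 else 0) * wgt mu τf (Fin.last (s+1)) h := by
    intro h _
    rw [IH _ hcomp' (leftP σ (kmin σ h))]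
  rw [Finset.sum_congr rfl step2]
  set τpp := psum (List.ofFn (fun j : Fin (s+1) => τf j.castSucc)) with hτppdef
  set τl := τf (Fin.last (s+1)) with hτldef
  set τpen := τf ((Fin.last s).castSucc) with hτpendef
  have hτpp : τpp = pdsP (psum (List.ofFn (fun i : Fin s => τf i.castSucc.castSucc))) τpen := by
    rw [hτppdef, psum_ofFn_succ']
  set τppp := psum (List.ofFn (fun i : Fin s => τf i.castSucc.castSucc)) with hτpppdef
  have hτsum : psum (List.ofFn τf) = pdsP τpp τl := psum_ofFn_succ' τf
  have hpen : 0 < τpen.1 := (hcomp _).1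
  have hpenind : ¬ Decomp τpen.2 := (hcomp _).2
  have hl : 0 < τl.1 := (hcomp _).1
  have hlind : ¬ Decomp τl.2 := (hcomp _).2
  -- the weight of the last coordinate
  have hwL : ∀ h : PermPt, wgt mu τf (Fin.last (s+1)) h
      = mu h τl + (if h = pempty ∧ τpen = τl then 1 else 0) := by
    intro h
    have hidx : (⟨((Fin.last (s+1) : Fin (s+2)) : ℕ) - 1,
        lt_of_le_of_lt (Nat.sub_le _ _) (Fin.last (s+1)).isLt⟩ : Fin (s+2))
        = (Fin.last s).castSucc := by
      apply Fin.ext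
      simp
    rw [wgt]
    by_cases hc : h = pempty ∧ τpen = τl
    · rw [if_pos ⟨hc.1, by simp, by rw [hidx, ← hτpendef, ← hτldef]; exact hc.2⟩,
        if_pos hc]
    · have hne : ¬ (h = pempty ∧ ∃ _ : 1 ≤ ((Fin.last (s+1) : Fin (s+2)) : ℕ),
          τf ⟨((Fin.last (s+1) : Fin (s+2)) : ℕ) - 1,
            lt_of_le_of_lt (Nat.sub_le _ _) (Fin.last (s+1)).isLt⟩
            = τf (Fin.last (s+1))) := by
        rintro ⟨he, -, he2⟩
        rw [hidx, ← hτpendef, ← hτldef] at he2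
        exact hc ⟨he, he2⟩
      rw [if_neg hne, if_neg hc, add_zero]
  by_cases hA : splitsAt σ τpp.1 ∧ leftP σ τpp.1 = τpp
  · obtain ⟨hsp, hlp⟩ := hA
    have hσ : σ = pdsP τpp (rightP σ τpp.1) := by
      conv_lhs => rw [split_eq hsp]
      rw [hlp]
    obtain ⟨β, hβ⟩ : ∃ β, rightP σ τpp.1 = β := ⟨_, rfl⟩
    rw [hβ] at hσ
    have hσ' : σ = pdsP (pdsP τppp τpen) β := by rw [hσ, hτpp]
    have hindic := fun h => key_indicator hpen hpenind hσ' h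
    have step3 : ∀ h ∈ IccF pempty τl,
        (if leftP σ (kmin σ h) = τpp then (1:ℤ) else 0) * wgt mu τf (Fin.last (s+1)) h
        = (if (ple β h ∧ ¬ ple (pdsP τpen β) h) then 1 else 0)
          * wgt mu τf (Fin.last (s+1)) h := by
      intro h _
      congr 1
      by_cases hc : ple β h ∧ ¬ ple (pdsP τpen β) h
      · rw [if_pos hc, if_pos (by rw [hτpp]; exact (hindic h).mpr hc)]
      · rw [if_neg hc, if_neg (fun hd => hc ((hindic h).mp (by rw [← hτpp]; exact hd)))]
    rw [Finset.sum_congr rfl step3,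
      Finset.sum_congr rfl (fun h hh => by rw [hwL h]),
      key_sumA hmu τpen τl β
        (fun h => mu h τl + (if h = pempty ∧ τpen = τl then 1 else 0))
        hpen hl hlind (fun _ => rfl)]
    have hiff : σ = psum (List.ofFn τf) ↔ β = τl := by
      rw [hτsum, hσ]
      constructor
      · exact fun hc => pdsP_right_cancel hc
      · intro hc; rw [hc]
    by_cases hc : β = τl
    · rw [if_pos hc, if_pos (hiff.mpr hc)]
    · rw [if_neg hc, if_neg (fun hd => hc (hiff.mp hd))]
  · -- no split of σ matching τpp : both sides vanish
    have hz : ∀ h ∈ IccF pempty τl,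
        (if leftP σ (kmin σ h) = τpp then (1:ℤ) else 0)
          * wgt mu τf (Fin.last (s+1)) h = 0 := by
      intro h _
      have hne : ¬ (leftP σ (kmin σ h) = τpp) := by
        intro he
        have hkm := kmin_mem σ h
        have hklen : kmin σ h = τpp.1 := by
          have h1 := leftP_fst hkm.1
          rw [he] at h1
          exact h1.symm
        rw [hklen] at hkm he
        exact hA ⟨hkm.1, he⟩
      rw [if_neg hne, zero_mul]
    have hne2 : ¬ (σ = psum (List.ofFn τf)) := by
      intro hc
      apply hA
      rw [hτsum] at hc
      constructor
      · rw [hc]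
        exact splitsAt_pdsP τpp τl
      · rw [hc]
        exact leftP_pdsP τpp τl
    rw [Finset.sum_eq_zero hz, if_neg hne2]
lemma key_all {mu : PermPt → PermPt → ℤ} (hmu : IsMobius mu) :
    ∀ (t : ℕ) (τf : Fin t → PermPt), 0 < t →
      (∀ m, 0 < (τf m).1 ∧ ¬ Decomp (τf m).2) → ∀ σ : PermPt,
      ∑ g ∈ Gfin τf σ, ∏ m, wgt mu τf m (g m)
        = if σ = psum (List.ofFn τf) then 1 else 0 := by
  intro t
  induction t with
  | zero => intro τf h; omega
  | succ s ih =>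
    intro τf _ hcomp σ
    cases s with
    | zero => exact key_base hmu τf σ
    | succ s' =>
      exact key_step hmu (fun τg hc σ' => ih τg (by omega) hc σ') τf hcomp σ

noncomputable def AFin {t : ℕ} (τf : Fin t → PermPt) (lam : PermPt) :
    Finset (Fin t → PermPt) :=
  (Fintype.piFinset (fun m => IccF pempty (τf m))).filter
    (fun g => lam = psum (List.ofFn g))

lemma mem_AFin {t : ℕ} {τf : Fin t → PermPt} {lam : PermPt} {g : Fin t → PermPt} :
    g ∈ AFin τf lam ↔ (∀ m, ple (g m) (τf m)) ∧ lam = psum (List.ofFn g) := by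
  simp [AFin, Fintype.mem_piFinset, mem_IccF, ple_pempty]

lemma partitionA {t : ℕ} (τf : Fin t → PermPt) (W : (Fin t → PermPt) → ℤ)
    (σ τ : PermPt) (hστ : ple σ τ) (hτ : τ = psum (List.ofFn τf)) :
    ∑ lam ∈ IccF σ τ, ∑ g ∈ AFin τf lam, W g = ∑ g ∈ Gfin τf σ, W g := by
  have hmaps : ∀ g ∈ Gfin τf σ, psum (List.ofFn g) ∈ IccF σ τ := by
    intro g hg
    obtain ⟨h1, h2⟩ := mem_Gfin.mp hg
    refine mem_IccF.mpr ⟨h2, ?_⟩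
    rw [hτ]
    exact ple_psum_mono g τf h1
  rw [← Finset.sum_fiberwise_of_maps_to hmaps W]
  apply Finset.sum_congr rfl
  intro lam hlam
  apply Finset.sum_congr _ (fun _ _ => rfl)
  ext g
  rw [Finset.mem_filter, mem_AFin, mem_Gfin]
  constructor
  · rintro ⟨h1, h2⟩
    refine ⟨⟨h1, ?_⟩, h2.symm⟩
    rw [← h2]
    exact (mem_IccF.mp hlam).1
  · rintro ⟨⟨h1, -⟩, h3⟩
    exact ⟨h1, h3.symm⟩
lemma main_claim {mu : PermPt → PermPt → ℤ} (hmu : IsMobius mu)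
    {t : ℕ} (ht : 0 < t) (τf : Fin t → PermPt)
    (hcomp : ∀ m : Fin t, 0 < (τf m).1 ∧ ¬ Decomp (τf m).2)
    (τ : PermPt) (hτ : τ = psum (List.ofFn τf)) :
    ∀ d : ℕ, ∀ σ : PermPt, ple σ τ → τ.1 - σ.1 ≤ d →
      mu σ τ = ∑ g ∈ AFin τf σ, ∏ m, wgt mu τf m (g m) := by
  have hpart : ∀ σ : PermPt, ple σ τ →
      ∑ lam ∈ IccF σ τ, (∑ g ∈ AFin τf lam, ∏ m, wgt mu τf m (g m))
        = if σ = τ then 1 else 0 := by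
    intro σ hστ
    rw [partitionA τf _ σ τ hστ hτ, key_all hmu t τf ht hcomp σ, ← hτ]
  intro d
  induction d with
  | zero =>
    intro σ hστ hd
    have heq : σ = τ := eq_of_ple_of_len_le hστ (by omega)
    subst heq
    have := hpart σ (ple_refl σ)
    rw [IccF_self, Finset.sum_singleton, if_pos rfl] at this
    rw [this, hmu.1]
  | succ d ih =>
    intro σ hστ hd
    by_cases heq : σ = τ
    · subst heq
      have := hpart σ (ple_refl σ)
      rw [IccF_self, Finset.sum_singleton, if_pos rfl] at this
      rw [this, hmu.1]
    · have h1 : ∑ lam ∈ IccF σ τ, mu lam τ = 0 := by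
        rw [mu_sum_left_total hmu, if_neg heq]
      have h2 : ∑ lam ∈ IccF σ τ, (∑ g ∈ AFin τf lam, ∏ m, wgt mu τf m (g m)) = 0 := by
        rw [hpart σ hστ, if_neg heq]
      have hσmem : σ ∈ IccF σ τ := mem_IccF.mpr ⟨ple_refl σ, hστ⟩
      have hsub : ∑ lam ∈ IccF σ τ,
          (mu lam τ - ∑ g ∈ AFin τf lam, ∏ m, wgt mu τf m (g m)) = 0 := by
        rw [Finset.sum_sub_distrib, h1, h2]
        ring
      have herase : ∀ lam ∈ (IccF σ τ).erase σ,
          mu lam τ - (∑ g ∈ AFin τf lam, ∏ m, wgt mu τf m (g m)) = 0 := by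
        intro lam hlam
        have hne := Finset.ne_of_mem_erase hlam
        obtain ⟨hσlam, hlamτ⟩ := mem_IccF.mp (Finset.mem_of_mem_erase hlam)
        have hlen : σ.1 < lam.1 := by
          rcases Nat.lt_or_ge σ.1 lam.1 with h | h
          · exact h
          · exact absurd (eq_of_ple_of_len_le hσlam h).symm hne
        have hl2 := ple_len hlamτ
        have hd2 : τ.1 - lam.1 ≤ d := by
          clear hpart h1 h2 hsub hσmem
          omega
        have := ih lam hlamτ hd2
        rw [this, sub_self]
      have := Finset.add_sum_erase _
        (fun lam => mu lam τ - ∑ g ∈ AFin τf lam, ∏ m, wgt mu τf m (g m)) hσmem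
      rw [Finset.sum_eq_zero herase, add_zero, hsub] at this
      exact sub_eq_zero.mp this

theorem mobius_decomposable' (mu : PermPt → PermPt → ℤ) (hmu : IsMobius mu)
    (σ τ : PermPt) (t : ℕ) (ht : 2 ≤ t) (τf : Fin t → PermPt)
    (hcomp : ∀ m : Fin t, 0 < (τf m).1 ∧ ¬ Decomp (τf m).2)
    (hτ : τ = psum (List.ofFn τf)) :
    mu σ τ =
      ∑ᶠ g ∈ {g : Fin t → PermPt |
          σ = psum (List.ofFn g) ∧ ∀ m : Fin t, ple (g m) (τf m)},
        ∏ m : Fin t, wgt mu τf m (g m) := by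
  have hset : {g : Fin t → PermPt |
      σ = psum (List.ofFn g) ∧ ∀ m : Fin t, ple (g m) (τf m)} = ↑(AFin τf σ) := by
    ext g
    simp only [Set.mem_setOf_eq, Finset.coe_mem, Finset.mem_coe, mem_AFin]
    tauto
  rw [hset, finsum_mem_coe_finset]
  by_cases hple : ple σ τ
  · exact main_claim hmu (by omega) τf hcomp τ hτ (τ.1 - σ.1) σ hple (le_refl _)
  · rw [hmu.2.1 σ τ hple]
    have : AFin τf σ = ∅ := by
      ext g
      simp only [Finset.notMem_empty, iff_false, mem_AFin]
      rintro ⟨h1, h2⟩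
      apply hple
      rw [h2, hτ]
      exact ple_psum_mono g τf h1
    rw [this, Finset.sum_empty]

/-- Recursion for the Möbius function of a decomposable permutation `τ` with
finest decomposition `τ = τ₁ ⊕ ⋯ ⊕ τ_t` (`t ≥ 2`, the components nonempty and
indecomposable): `μ(σ,τ)` is the sum over all decompositions
`σ = σ̃₁ ⊕ ⋯ ⊕ σ̃_t` with `σ̃_m ≤ τ_m` (empty components allowed) of the
product of `μ(σ̃_m, τ_m) + 1` when `σ̃_m = ∅` and `τ_{m−1} = τ_m`, and
`μ(σ̃_m, τ_m)` otherwise. -/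
theorem mobius_decomposable (mu : PermPt → PermPt → ℤ) (hmu : IsMobius mu)
    (σ τ : PermPt) (t : ℕ) (ht : 2 ≤ t) (τf : Fin t → PermPt)
    (hcomp : ∀ m : Fin t, 0 < (τf m).1 ∧ ¬ Decomp (τf m).2)
    (hτ : τ = psum (List.ofFn τf)) :
    mu σ τ =
      ∑ᶠ g ∈ {g : Fin t → PermPt |
          σ = psum (List.ofFn g) ∧ ∀ m : Fin t, ple (g m) (τf m)},
        ∏ m : Fin t,
          (if g m = pempty ∧ ∃ _ : 1 ≤ (m : ℕ),
              τf ⟨(m : ℕ) - 1, lt_of_le_of_lt (Nat.sub_le _ _) m.isLt⟩ = τf m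
           then mu (g m) (τf m) + 1
           else mu (g m) (τf m)) :=
  mobius_decomposable' mu hmu σ τ t ht τf hcomp hτ
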